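/- Let N_r, N_t, m be positive natural numbers, let (Ω, μ) be a probability space, and let X : Ω → Matrix (Fin N_r × Fin m) (Fin N_t × Fin m) ℂ be a random matrix such that every X ω has diagonal blocks and every entry of X is integrable and square-integrable. Let σ ≥ 0 and suppose the second-moment condition holds: for all i, j ∈ Fin N_r, k, l ∈ Fin N_t and p ∈ Fin m, ∫ (X ω (i,p) (k,p)) · conj(X ω (j,p) (l,p)) dμ = σ² if (i = j and k = l), and = 0 otherwise. Then for every deterministic Z : Matrix (Fin N_t × Fin m) (Fin N_t × Fin m) ℂ with diagonal blocks, the entrywise expectation satisfies: for all i, j ∈ Fin N_r and p, q ∈ Fin m, ∫ ((X ω) * Z * (X ω)ᴴ) (i,p) (j,q) dμ equals σ² · ∑_{k ∈ Fin N_t} Z (k,p) (k,p) if (i = j and p = q), and equals 0 otherwise. That is, E[X Z Xᴴ] = σ² · ∑_k (I_{N_r} ⊗ Z_{k,k}), a block diagonal matrix with N_r copies of the diagonal matrix ∑_k Z_{k,k}. -/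

import Mathlib

open Matrix MeasureTheory
open scoped ComplexConjugate

/-- A block matrix (with `m × m` blocks) has diagonal blocks if every off-diagonal
entry of every block vanishes. -/
def HasDiagonalBlocks {a b m : ℕ} (X : Matrix (Fin a × Fin m) (Fin b × Fin m) ℂ) : Prop :=
  ∀ (i : Fin a) (p : Fin m) (j : Fin b) (q : Fin m), p ≠ q → X (i, p) (j, q) = 0

private lemma memLp_conj_aux {Ω : Type*} [MeasurableSpace Ω] {μ : Measure Ω}
    {f : Ω → ℂ} (hf : MeasureTheory.MemLp f 2 μ) :
    MeasureTheory.MemLp (fun ω => conj (f ω)) 2 μ :=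
  hf.of_le (Complex.continuous_conj.comp_aestronglyMeasurable hf.1)
    (Filter.Eventually.of_forall fun ω => by simp)

private lemma integrable_mul_conj {Ω : Type*} [MeasurableSpace Ω] {μ : Measure Ω}
    {f g : Ω → ℂ} (hf : MeasureTheory.MemLp f 2 μ) (hg : MeasureTheory.MemLp g 2 μ) :
    Integrable (fun ω => f ω * conj (g ω)) μ := by
  have h := (memLp_conj_aux hg).smul (φ := f) hf
    (p := 2) (q := 2) (r := (1 : ENNReal))
    (hpqr := ⟨by rw [ENNReal.inv_two_add_inv_two, inv_one]⟩)
  rw [MeasureTheory.memLp_one_iff_integrable] at h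
  exact h

/-- For a random block matrix `X` with diagonal blocks and i.i.d.-type second
moments, `E[X Z Xᴴ] = σ² ∑ₖ (I ⊗ Z k k)` for every deterministic `Z` with
diagonal blocks. -/
theorem expectation_mul_mul_conjTranspose
    (N_r N_t m : ℕ) (hNr : 0 < N_r) (hNt : 0 < N_t) (hm : 0 < m)
    {Ω : Type*} [MeasurableSpace Ω] (μ : Measure Ω) [IsProbabilityMeasure μ]
    (X : Ω → Matrix (Fin N_r × Fin m) (Fin N_t × Fin m) ℂ)
    (hdiag : ∀ ω, HasDiagonalBlocks (X ω))
    (hint : ∀ u v, Integrable (fun ω => X ω u v) μ)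
    (hsq : ∀ u v, MemLp (fun ω => X ω u v) 2 μ)
    (σ : ℝ) (hσ : 0 ≤ σ)
    (hmom : ∀ (i j : Fin N_r) (k l : Fin N_t) (p : Fin m),
      ∫ ω, X ω (i, p) (k, p) * conj (X ω (j, p) (l, p)) ∂μ =
        if i = j ∧ k = l then ((σ : ℂ) ^ 2) else 0)
    (Z : Matrix (Fin N_t × Fin m) (Fin N_t × Fin m) ℂ) (hZ : HasDiagonalBlocks Z) :
    ∀ (i j : Fin N_r) (p q : Fin m),
      ∫ ω, (X ω * Z * (X ω)ᴴ) (i, p) (j, q) ∂μ =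
        if i = j ∧ p = q then ((σ : ℂ) ^ 2) * ∑ k : Fin N_t, Z (k, p) (k, p) else 0 := by
  intro i j p q
  have hI : ∀ (u v : Fin N_t × Fin m),
      Integrable (fun ω => X ω (i, p) u * Z u v * conj (X ω (j, q) v)) μ := by
    intro u v
    have h := (integrable_mul_conj (hsq (i, p) u) (hsq (j, q) v)).const_mul (Z u v)
    exact h.congr (Filter.Eventually.of_forall fun ω => by ring)
  have hstep : ∀ ω, (X ω * Z * (X ω)ᴴ) (i, p) (j, q) =
      ∑ u : Fin N_t × Fin m, ∑ v : Fin N_t × Fin m,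
        X ω (i, p) u * Z u v * conj (X ω (j, q) v) := by
    intro ω
    simp only [Matrix.mul_apply, Matrix.conjTranspose_apply, Finset.sum_mul,
      RCLike.star_def]
    rw [Finset.sum_comm]
  have hsplit : ∫ ω, (X ω * Z * (X ω)ᴴ) (i, p) (j, q) ∂μ =
      ∑ u : Fin N_t × Fin m, ∑ v : Fin N_t × Fin m,
        ∫ ω, X ω (i, p) u * Z u v * conj (X ω (j, q) v) ∂μ := by
    simp_rw [hstep]
    rw [integral_finset_sum _ fun u _ => integrable_finset_sum _ fun v _ => hI u v]
    exact Finset.sum_congr rfl fun u _ => integral_finset_sum _ fun v _ => hI u v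
  rw [hsplit]
  have hval : ∀ (k l : Fin N_t) (r s : Fin m),
      ∫ ω, X ω (i, p) (k, r) * Z (k, r) (l, s) * conj (X ω (j, q) (l, s)) ∂μ =
        if r = p ∧ s = q ∧ p = q then
          Z (k, p) (l, p) * (if i = j ∧ k = l then ((σ : ℂ) ^ 2) else 0) else 0 := by
    intro k l r s
    by_cases hr : r = p
    · by_cases hs : s = q
      · by_cases hpq : p = q
        · simp only [hr, hs, hpq, and_self, true_and, if_true, eq_self_iff_true]
          have : ∀ ω, X ω (i, q) (k, q) * Z (k, q) (l, q) * conj (X ω (j, q) (l, q)) =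
              Z (k, q) (l, q) * (X ω (i, q) (k, q) * conj (X ω (j, q) (l, q))) := by
            intro ω; ring
          simp_rw [this]
          rw [MeasureTheory.integral_const_mul, hmom i j k l q]
        · simp only [hr, hs]
          simp [hZ k p l q hpq, hpq]
      · have hX0 : ∀ ω, X ω (j, q) (l, s) = 0 := fun ω => hdiag ω j q l s fun h => hs h.symm
        simp [hX0, hs]
    · have hX0 : ∀ ω, X ω (i, p) (k, r) = 0 := fun ω => hdiag ω i p k r fun h => hr h.symm
      simp [hX0, hr]
  have hrw : (∑ u : Fin N_t × Fin m, ∑ v : Fin N_t × Fin m,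
        ∫ ω, X ω (i, p) u * Z u v * conj (X ω (j, q) v) ∂μ) =
      ∑ u : Fin N_t × Fin m, ∑ v : Fin N_t × Fin m,
        (if u.2 = p ∧ v.2 = q ∧ p = q then
          Z (u.1, p) (v.1, p) * (if i = j ∧ u.1 = v.1 then ((σ : ℂ) ^ 2) else 0) else 0) :=
    Finset.sum_congr rfl fun u _ => Finset.sum_congr rfl fun v _ => hval u.1 v.1 u.2 v.2
  rw [hrw]
  by_cases hpq : p = q
  · subst hpq
    by_cases hij : i = j
    · subst hij
      simp only [Fintype.sum_prod_type, ite_and, Finset.sum_ite_eq, Finset.sum_ite_eq',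
        Finset.mem_univ, if_true, eq_self_iff_true, and_self, true_and, mul_ite, mul_zero,
        Finset.mul_sum]
      simp [Finset.sum_ite_eq, Finset.sum_ite_eq', mul_comm]
    · simp [hij]
  · simp [hpq]
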